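/- arXiv:1704.08480 — 2 statements merged into one kernel-verified Lean document; each statement's English description precedes it below -/
import Mathlib

section
/- Let C be a monotone normalized XOS cost function and let ALG maximize Σ_i v_i(S_i) − P_C(S) over allocations S. Then for the welfare SW(S) = Σ_i v_i(S_i) − C(S) and any allocation OPT, SW(OPT) − SW(ALG) ≤ (H_n − 1) · C(OPT). -/
open Finset

variable {α : Type*}

noncomputable def potential [DecidableEq α] (n : ℕ)
    (C : Finset α → ℝ) (S : Fin n → Finset α) : ℝ :=
  ∑ I ∈ (univ : Finset (Fin n)).powerset.filter (· ≠ ∅),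
    C (I.biUnion S) / ((I.card : ℝ) * (n.choose I.card : ℝ))

lemma sum_g (n : ℕ) :
    ∑ I ∈ (univ : Finset (Fin n)).powerset, ((I.card : ℝ) * (n.choose I.card : ℝ))⁻¹
      = ∑ k ∈ Finset.range n, (1 : ℝ) / (k + 1) := by
  rw [Finset.sum_powerset_apply_card (f := fun m => ((m : ℝ) * (n.choose m : ℝ))⁻¹)]
  simp only [card_univ, Fintype.card_fin]
  rw [Finset.sum_range_succ']
  simp only [Nat.cast_zero, zero_mul, inv_zero, smul_zero, add_zero]
  refine Finset.sum_congr rfl fun k hk => ?_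
  have hk' : k + 1 ≤ n := Nat.succ_le_of_lt (mem_range.1 hk)
  have hc : 0 < n.choose (k + 1) := Nat.choose_pos hk'
  rw [nsmul_eq_mul]
  have h1 : ((k + 1 : ℕ) : ℝ) ≠ 0 := by positivity
  have h2 : ((n.choose (k + 1) : ℕ) : ℝ) ≠ 0 := by positivity
  field_simp
  push_cast
  ring

lemma sum_g_mem (n : ℕ) (i : Fin n) :
    ∑ I ∈ (univ : Finset (Fin n)).powerset,
      (if i ∈ I then ((I.card : ℝ) * (n.choose I.card : ℝ))⁻¹ else 0) = 1 := by
  have h0 : insert i ((univ : Finset (Fin n)).erase i) = univ :=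
    insert_erase (mem_univ i)
  rw [← h0, Finset.sum_powerset_insert (notMem_erase i _)]
  have hz : ∑ J ∈ ((univ : Finset (Fin n)).erase i).powerset,
      (if i ∈ J then ((J.card : ℝ) * (n.choose J.card : ℝ))⁻¹ else 0) = 0 := by
    refine Finset.sum_eq_zero fun J hJ => ?_
    have : i ∉ J := fun h => (notMem_erase i _) (mem_powerset.1 hJ h)
    simp [this]
  rw [hz, zero_add]
  have hre : ∀ J ∈ ((univ : Finset (Fin n)).erase i).powerset,
      (if i ∈ insert i J then
        (((insert i J).card : ℝ) * (n.choose (insert i J).card : ℝ))⁻¹ else 0)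
      = (fun m => (((m + 1 : ℕ) : ℝ) * (n.choose (m + 1) : ℝ))⁻¹) J.card := by
    intro J hJ
    have hij : i ∉ J := fun h => (notMem_erase i _) (mem_powerset.1 hJ h)
    rw [if_pos (mem_insert_self i J), card_insert_of_notMem hij]
  rw [Finset.sum_congr rfl hre,
    Finset.sum_powerset_apply_card (f := fun m => (((m + 1 : ℕ) : ℝ) * (n.choose (m + 1) : ℝ))⁻¹)]
  have hcard : ((univ : Finset (Fin n)).erase i).card = n - 1 := by
    rw [card_erase_of_mem (mem_univ i), card_univ, Fintype.card_fin]
  have hn : 0 < n := i.pos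
  have hone : ∀ m ∈ Finset.range (n - 1 + 1),
      (n - 1).choose m • (((m + 1 : ℕ) : ℝ) * (n.choose (m + 1) : ℝ))⁻¹ = (n : ℝ)⁻¹ := by
    intro m hm
    have hm' : m ≤ n - 1 := Nat.lt_succ_iff.1 (mem_range.1 hm)
    have hkey : (m + 1) * n.choose (m + 1) = n * (n - 1).choose m := by
      obtain ⟨p, rfl⟩ := Nat.exists_eq_add_of_lt hn
      simp only [Nat.add_sub_cancel] at *
      rw [mul_comm (m+1), ← Nat.add_one_mul_choose_eq, Nat.zero_add]
    have hc : 0 < (n - 1).choose m := Nat.choose_pos hm'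
    have hn' : ((n : ℕ) : ℝ) ≠ 0 := by positivity
    have hc' : (((n - 1).choose m : ℕ) : ℝ) ≠ 0 := by positivity
    rw [nsmul_eq_mul]
    rw [show (((m + 1 : ℕ) : ℝ) * (n.choose (m + 1) : ℝ)) = ((n : ℝ) * ((n-1).choose m : ℝ)) by
      exact_mod_cast congrArg (Nat.cast : ℕ → ℝ) hkey]
    field_simp
  rw [hcard, Finset.sum_congr rfl hone, Finset.sum_const, card_range, nsmul_eq_mul]
  have : n - 1 + 1 = n := Nat.succ_pred_eq_of_pos hn
  rw [this]
  field_simp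

lemma potential_eq [DecidableEq α] (n : ℕ) (C : Finset α → ℝ) (hC0 : C ∅ = 0)
    (S : Fin n → Finset α) :
    potential n C S = ∑ I ∈ (univ : Finset (Fin n)).powerset,
      C (I.biUnion S) * ((I.card : ℝ) * (n.choose I.card : ℝ))⁻¹ := by
  unfold potential
  rw [Finset.sum_filter]
  refine Finset.sum_congr rfl fun I _ => ?_
  by_cases hI : I = ∅
  · subst hI
    simp [hC0]
  · rw [if_pos hI, div_eq_mul_inv]

lemma potential_le [DecidableEq α] (n : ℕ) (C : Finset α → ℝ) (hC0 : C ∅ = 0)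
    (hCmono : ∀ S T : Finset α, S ⊆ T → C S ≤ C T) (S : Fin n → Finset α) :
    potential n C S ≤ (∑ k ∈ Finset.range n, (1 : ℝ) / (k + 1)) * C (univ.biUnion S) := by
  rw [potential_eq n C hC0 S, ← sum_g n]
  rw [Finset.sum_mul]
  refine Finset.sum_le_sum fun I _ => ?_
  rw [mul_comm]
  have hsub : I.biUnion S ⊆ univ.biUnion S :=
    biUnion_subset_biUnion_of_subset_left S (subset_univ I)
  have hg : (0 : ℝ) ≤ ((I.card : ℝ) * (n.choose I.card : ℝ))⁻¹ := by positivity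
  exact mul_le_mul_of_nonneg_left (hCmono _ _ hsub) hg

lemma le_potential [DecidableEq α] (n : ℕ) (C : Finset α → ℝ) (hC0 : C ∅ = 0)
    (t : ℕ) (ht : 0 < t) (a : Fin t → α → ℝ)
    (hxos : ∀ S : Finset α, C S =
      (univ : Finset (Fin t)).sup' ⟨⟨0, ht⟩, mem_univ _⟩ (fun r => ∑ x ∈ S, a r x))
    (S : Fin n → Finset α) (hdisj : ∀ i j : Fin n, i ≠ j → Disjoint (S i) (S j)) :
    C (univ.biUnion S) ≤ potential n C S := by
  obtain ⟨r, -, hr⟩ := Finset.exists_mem_eq_sup' (⟨⟨0, ht⟩, mem_univ _⟩ :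
    (univ : Finset (Fin t)).Nonempty) (fun r => ∑ x ∈ univ.biUnion S, a r x)
  set w : Fin n → ℝ := fun i => ∑ x ∈ S i, a r x with hw
  have hpd : ∀ (I : Finset (Fin n)), Set.PairwiseDisjoint (I : Set (Fin n)) S :=
    fun I i _ j _ hij => hdisj i j hij
  have hCT : C (univ.biUnion S) = ∑ i, w i := by
    rw [hxos, hr, Finset.sum_biUnion (hpd univ)]
  have hterm : ∀ I : Finset (Fin n), ∑ i ∈ I, w i ≤ C (I.biUnion S) := by
    intro I
    rw [hxos, ← Finset.sum_biUnion (hpd I)]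
    exact Finset.le_sup' (fun r => ∑ x ∈ I.biUnion S, a r x) (mem_univ r)
  rw [hCT, potential_eq n C hC0 S]
  calc ∑ i, w i
      = ∑ i, w i * ∑ I ∈ (univ : Finset (Fin n)).powerset,
          (if i ∈ I then ((I.card : ℝ) * (n.choose I.card : ℝ))⁻¹ else 0) := by
        refine Finset.sum_congr rfl fun i _ => ?_
        rw [sum_g_mem n i, mul_one]
    _ = ∑ i, ∑ I ∈ (univ : Finset (Fin n)).powerset,
          (if i ∈ I then w i * ((I.card : ℝ) * (n.choose I.card : ℝ))⁻¹ else 0) := by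
        refine Finset.sum_congr rfl fun i _ => ?_
        rw [Finset.mul_sum]
        exact Finset.sum_congr rfl fun I _ => by rw [mul_ite, mul_zero]
    _ = ∑ I ∈ (univ : Finset (Fin n)).powerset, ∑ i,
          (if i ∈ I then w i * ((I.card : ℝ) * (n.choose I.card : ℝ))⁻¹ else 0) :=
        Finset.sum_comm
    _ = ∑ I ∈ (univ : Finset (Fin n)).powerset,
          (∑ i ∈ I, w i) * ((I.card : ℝ) * (n.choose I.card : ℝ))⁻¹ := by
        refine Finset.sum_congr rfl fun I _ => ?_
        rw [Finset.sum_ite_mem, univ_inter, Finset.sum_mul]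
    _ ≤ ∑ I ∈ (univ : Finset (Fin n)).powerset,
          C (I.biUnion S) * ((I.card : ℝ) * (n.choose I.card : ℝ))⁻¹ := by
        refine Finset.sum_le_sum fun I _ => ?_
        have hg : (0 : ℝ) ≤ ((I.card : ℝ) * (n.choose I.card : ℝ))⁻¹ := by positivity
        exact mul_le_mul_of_nonneg_right (hterm I) hg

theorem stmt11 [DecidableEq α] (n : ℕ) (M : Fin n → Finset α)
    (hM : ∀ i j : Fin n, i ≠ j → Disjoint (M i) (M j))
    (C : Finset α → ℝ) (hC0 : C ∅ = 0)
    (hCmono : ∀ S T : Finset α, S ⊆ T → C S ≤ C T)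
    (t : ℕ) (ht : 0 < t) (a : Fin t → α → ℝ) (ha : ∀ r x, 0 ≤ a r x)
    (hxos : ∀ S : Finset α, C S =
      (univ : Finset (Fin t)).sup' ⟨⟨0, ht⟩, mem_univ _⟩ (fun r => ∑ x ∈ S, a r x))
    (v : Fin n → Finset α → ℝ) (hv0 : ∀ i, v i ∅ = 0)
    (hvmono : ∀ i, ∀ S T : Finset α, S ⊆ T → T ⊆ M i → v i S ≤ v i T)
    (hvnn : ∀ i S, 0 ≤ v i S)
    (ALG : Fin n → Finset α) (hALGsub : ∀ i, ALG i ⊆ M i)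
    (hALGmax : ∀ S : Fin n → Finset α, (∀ i, S i ⊆ M i) →
      ∑ i, v i (S i) - potential n C S ≤ ∑ i, v i (ALG i) - potential n C ALG)
    (OPT : Fin n → Finset α) (hOPT : ∀ i, OPT i ⊆ M i) :
    (∑ i, v i (OPT i) - C (univ.biUnion OPT)) -
        (∑ i, v i (ALG i) - C (univ.biUnion ALG)) ≤
      ((∑ k ∈ Finset.range n, (1 : ℝ) / (k + 1)) - 1) * C (univ.biUnion OPT) := by
  have h1 := hALGmax OPT hOPT
  have h2 := potential_le n C hC0 hCmono OPT
  have hALGdisj : ∀ i j : Fin n, i ≠ j → Disjoint (ALG i) (ALG j) :=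
    fun i j hij => (hM i j hij).mono (hALGsub i) (hALGsub j)
  have h3 := le_potential n C hC0 t ht a hxos ALG hALGdisj
  nlinarith [h1, h2, h3]
end

section
/- Suppose C is submodular and the valuations are supermodular (or n = 2). Then the Potential Mechanism is H_n-budget-balanced: its total payments satisfy C(ALG) ≤ Σ_i p_i ≤ H_n · C(ALG). -/
open Finset

variable {α : Type*}

lemma card_le_n {n : ℕ} (I : Finset (Fin n)) : I.card ≤ n := by
  simpa using Finset.card_le_card (Finset.subset_univ I)

lemma dpos {n : ℕ} {I : Finset (Fin n)} (hne : I ≠ ∅) :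
    0 < (I.card : ℝ) * (n.choose I.card : ℝ) := by
  have h1 : 0 < I.card := Finset.card_pos.2 (Finset.nonempty_of_ne_empty hne)
  have h2 : 0 < n.choose I.card := Nat.choose_pos (card_le_n I)
  positivity

lemma potential_eq_full [DecidableEq α] (n : ℕ) (C : Finset α → ℝ) (S : Fin n → Finset α) :
    potential n C S = ∑ I ∈ (univ : Finset (Fin n)).powerset,
      C (I.biUnion S) / ((I.card : ℝ) * (n.choose I.card : ℝ)) := by
  rw [potential, Finset.sum_filter]
  refine Finset.sum_congr rfl fun I _ => ?_
  by_cases h : I = ∅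
  · subst h; simp
  · simp [h]

lemma potential_empty [DecidableEq α] (n : ℕ) (C : Finset α → ℝ) (hC0 : C ∅ = 0) :
    potential n C (fun _ => (∅ : Finset α)) = 0 := by
  rw [potential]
  refine Finset.sum_eq_zero fun I _ => ?_
  have : I.biUnion (fun _ => (∅ : Finset α)) = ∅ := by
    ext x; simp
  rw [this, hC0, zero_div]

lemma biUnion_update [DecidableEq α] {n : ℕ} (S : Fin n → Finset α) (i : Fin n)
    (I : Finset (Fin n)) :
    I.biUnion (Function.update S i ∅) = (I.erase i).biUnion S := by
  ext x
  simp only [Finset.mem_biUnion, Finset.mem_erase]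
  constructor
  · rintro ⟨j, hj, hx⟩
    rcases eq_or_ne j i with rfl | hne
    · simp [Function.update_self] at hx
    · exact ⟨j, ⟨hne, hj⟩, by rwa [Function.update_of_ne hne] at hx⟩
  · rintro ⟨j, ⟨hne, hj⟩, hx⟩
    exact ⟨j, hj, by rwa [Function.update_of_ne hne]⟩

lemma coefsum (n : ℕ) :
    ∑ I ∈ (univ : Finset (Fin n)).powerset,
      (1 : ℝ) / ((I.card : ℝ) * (n.choose I.card : ℝ))
    = ∑ k ∈ Finset.range n, (1 : ℝ) / (k + 1) := by
  have h := Finset.sum_powerset_apply_card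
    (f := fun m : ℕ => (1 : ℝ) / ((m : ℝ) * (n.choose m : ℝ))) (x := (univ : Finset (Fin n)))
  rw [Finset.card_univ, Fintype.card_fin] at h
  rw [h, Finset.sum_range_succ']
  have h0 : (n.choose 0) • ((1 : ℝ) / ((0 : ℕ) * (n.choose 0 : ℕ))) = 0 := by simp
  rw [h0, add_zero]
  refine Finset.sum_congr rfl fun k hk => ?_
  have hk' : k + 1 ≤ n := Finset.mem_range.1 hk
  have hc : (0 : ℝ) < (n.choose (k + 1) : ℝ) := by
    exact_mod_cast Nat.choose_pos hk'
  rw [nsmul_eq_mul]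
  rw [one_div, mul_inv, ← mul_assoc, mul_comm ((n.choose (k+1) : ℝ)) _]
  push_cast
  field_simp

lemma potential_le_harmonic [DecidableEq α] (n : ℕ) (C : Finset α → ℝ)
    (hCnn : ∀ S, 0 ≤ C S) (hCmono : ∀ S T : Finset α, S ⊆ T → C S ≤ C T)
    (S : Fin n → Finset α) :
    potential n C S ≤ (∑ k ∈ Finset.range n, (1 : ℝ) / (k + 1)) * C (univ.biUnion S) := by
  rw [potential_eq_full, ← coefsum, Finset.sum_mul]
  refine Finset.sum_le_sum fun I _ => ?_
  by_cases h : I = ∅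
  · subst h; simp
  · have hd := dpos (n := n) h
    rw [one_div, inv_mul_eq_div, div_le_div_iff₀ hd hd]
    have : C (I.biUnion S) ≤ C (univ.biUnion S) :=
      hCmono _ _ (Finset.biUnion_subset_biUnion_of_subset_left _ (Finset.subset_univ I))
    nlinarith [hCnn (I.biUnion S), hCnn (univ.biUnion S)]

lemma swap_lemma [DecidableEq α] {n : ℕ} (C : Finset α → ℝ) (S : Fin n → Finset α) :
    ∑ I ∈ (univ : Finset (Fin n)).powerset, ∑ i ∈ I,
        C ((I.erase i).biUnion S) / ((I.card : ℝ) * (n.choose I.card : ℝ))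
    = ∑ J ∈ (univ : Finset (Fin n)).powerset,
        ((n : ℝ) - (J.card : ℝ)) *
          (C (J.biUnion S) / (((J.card : ℝ) + 1) * (n.choose (J.card + 1) : ℝ))) := by
  have step1 : ∀ I ∈ (univ : Finset (Fin n)).powerset,
      ∑ i ∈ I, C ((I.erase i).biUnion S) / ((I.card : ℝ) * (n.choose I.card : ℝ))
      = ∑ i : Fin n, (if i ∈ I then
          C ((I.erase i).biUnion S) / ((I.card : ℝ) * (n.choose I.card : ℝ)) else 0) := by
    intro I _
    rw [Finset.sum_ite_mem, Finset.univ_inter]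
  rw [Finset.sum_congr rfl step1, Finset.sum_comm]
  have step2 : ∀ i : Fin n,
      (∑ I ∈ (univ : Finset (Fin n)).powerset, if i ∈ I then
          C ((I.erase i).biUnion S) / ((I.card : ℝ) * (n.choose I.card : ℝ)) else 0)
      = ∑ J ∈ (univ : Finset (Fin n)).powerset, (if i ∈ J then 0 else
          C (J.biUnion S) / (((J.card : ℝ) + 1) * (n.choose (J.card + 1) : ℝ))) := by
    intro i
    rw [← Finset.sum_filter]
    have : ∀ J : Finset (Fin n), (if i ∈ J then (0:ℝ) else
          C (J.biUnion S) / (((J.card : ℝ) + 1) * (n.choose (J.card + 1) : ℝ)))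
        = (if i ∉ J then C (J.biUnion S) / (((J.card : ℝ) + 1) * (n.choose (J.card + 1) : ℝ))
           else 0) := by
      intro J; by_cases h : i ∈ J <;> simp [h]
    rw [Finset.sum_congr rfl fun J _ => this J, ← Finset.sum_filter]
    refine Finset.sum_nbij' (fun I => I.erase i) (fun J => insert i J) ?_ ?_ ?_ ?_ ?_
    · intro I hI
      simp only [Finset.mem_filter, Finset.mem_powerset] at hI ⊢
      exact ⟨Finset.subset_univ _, Finset.notMem_erase i I⟩
    · intro J hJ
      simp only [Finset.mem_filter, Finset.mem_powerset] at hJ ⊢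
      exact ⟨Finset.subset_univ _, Finset.mem_insert_self i J⟩
    · intro I hI
      simp only [Finset.mem_filter] at hI
      exact Finset.insert_erase hI.2
    · intro J hJ
      simp only [Finset.mem_filter] at hJ
      exact Finset.erase_insert hJ.2
    · intro I hI
      simp only [Finset.mem_filter] at hI
      rw [← Finset.card_erase_add_one hI.2]
      push_cast
      ring_nf
  rw [Finset.sum_congr rfl fun i _ => step2 i, Finset.sum_comm]
  refine Finset.sum_congr rfl fun J hJ => ?_
  have hJn : J.card ≤ n := by simpa using Finset.card_le_card (Finset.subset_univ J)
  have : ∀ i : Fin n, (if i ∈ J then (0:ℝ) else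
        C (J.biUnion S) / (((J.card : ℝ) + 1) * (n.choose (J.card + 1) : ℝ)))
      = C (J.biUnion S) / (((J.card : ℝ) + 1) * (n.choose (J.card + 1) : ℝ))
        - (if i ∈ J then C (J.biUnion S) / (((J.card : ℝ) + 1) * (n.choose (J.card + 1) : ℝ))
           else 0) := by
    intro i; by_cases h : i ∈ J <;> simp [h]
  rw [Finset.sum_congr rfl fun i _ => this i, Finset.sum_sub_distrib, Finset.sum_const,
    Finset.sum_ite_mem, Finset.univ_inter, Finset.sum_const, Finset.card_univ,
    Fintype.card_fin, nsmul_eq_mul, nsmul_eq_mul]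
  ring

lemma shapley [DecidableEq α] {n : ℕ} (hn : 0 < n) (C : Finset α → ℝ) (hC0 : C ∅ = 0)
    (S : Fin n → Finset α) :
    ∑ i : Fin n, (potential n C S - potential n C (Function.update S i ∅))
      = C (univ.biUnion S) := by
  have hP : ∀ i : Fin n, potential n C S - potential n C (Function.update S i ∅)
      = ∑ I ∈ (univ : Finset (Fin n)).powerset,
          (C (I.biUnion S) / ((I.card : ℝ) * (n.choose I.card : ℝ))
            - C ((I.erase i).biUnion S) / ((I.card : ℝ) * (n.choose I.card : ℝ))) := by
    intro i
    rw [potential_eq_full, potential_eq_full, ← Finset.sum_sub_distrib]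
    refine Finset.sum_congr rfl fun I _ => ?_
    rw [biUnion_update]
  rw [Finset.sum_congr rfl fun i _ => hP i, Finset.sum_comm]
  have inner : ∀ I ∈ (univ : Finset (Fin n)).powerset,
      (∑ i : Fin n, (C (I.biUnion S) / ((I.card : ℝ) * (n.choose I.card : ℝ))
            - C ((I.erase i).biUnion S) / ((I.card : ℝ) * (n.choose I.card : ℝ))))
      = (I.card : ℝ) * (C (I.biUnion S) / ((I.card : ℝ) * (n.choose I.card : ℝ)))
        - ∑ i ∈ I, C ((I.erase i).biUnion S) / ((I.card : ℝ) * (n.choose I.card : ℝ)) := by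
    intro I _
    have hsub := Finset.sum_subset (f := fun i =>
        C (I.biUnion S) / ((I.card : ℝ) * (n.choose I.card : ℝ))
          - C ((I.erase i).biUnion S) / ((I.card : ℝ) * (n.choose I.card : ℝ)))
      (Finset.subset_univ I)
      (by intro x _ hx; simp only [Finset.erase_eq_of_notMem hx, sub_self])
    rw [← hsub, Finset.sum_sub_distrib, Finset.sum_const, nsmul_eq_mul]
  rw [Finset.sum_congr rfl inner, Finset.sum_sub_distrib, swap_lemma, ← Finset.sum_sub_distrib]
  rw [Finset.sum_eq_single_of_mem (univ : Finset (Fin n)) (Finset.mem_powerset_self _)]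
  · rw [Finset.card_univ, Fintype.card_fin, Nat.choose_self, sub_self, zero_mul, sub_zero]
    have hn' : (n : ℝ) ≠ 0 := Nat.cast_ne_zero.2 hn.ne'
    field_simp
    simp
  · intro I _ hIne
    by_cases hI : I = ∅
    · subst hI
      simp [hC0]
    · have hk0 : 0 < I.card := Finset.card_pos.2 (Finset.nonempty_of_ne_empty hI)
      have hkn : I.card < n := by
        have := Finset.card_lt_card (Finset.ssubset_univ_iff.2 hIne)
        simpa using this
      set k := I.card with hk
      have hchk : 0 < n.choose k := Nat.choose_pos hkn.le
      have hchk1 : 0 < n.choose (k + 1) := Nat.choose_pos hkn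
      have key : ((n.choose (k+1) : ℝ)) * ((k:ℝ) + 1) = (n.choose k : ℝ) * ((n : ℝ) - (k : ℝ)) := by
        have := Nat.choose_succ_right_eq n k
        have h2 := congrArg (Nat.cast : ℕ → ℝ) this
        push_cast [Nat.cast_sub hkn.le] at h2
        linarith
      have e1 : (k : ℝ) * (C (I.biUnion S) / ((k : ℝ) * (n.choose k : ℝ)))
          = C (I.biUnion S) / (n.choose k : ℝ) := by
        rw [mul_div_assoc']
        rw [mul_div_mul_left _ _ (by exact_mod_cast hk0.ne')]
      have e2 : ((n : ℝ) - (k : ℝ)) * (C (I.biUnion S) / (((k : ℝ) + 1) * (n.choose (k+1) : ℝ)))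
          = C (I.biUnion S) / (n.choose k : ℝ) := by
        have hnk : (n : ℝ) - (k : ℝ) ≠ 0 := by
          have : (k:ℝ) < (n:ℝ) := by exact_mod_cast hkn
          linarith
        have hden : ((k : ℝ) + 1) * (n.choose (k+1) : ℝ)
            = ((n : ℝ) - (k : ℝ)) * (n.choose k : ℝ) := by
          linarith [key]
        rw [hden, mul_div_assoc']
        rw [mul_div_mul_left _ _ hnk]
      rw [e1, e2, sub_self]

lemma biUnion_union' [DecidableEq α] {n : ℕ} (S T : Fin n → Finset α) (I : Finset (Fin n)) :
    I.biUnion (fun j => S j ∪ T j) = I.biUnion S ∪ I.biUnion T := by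
  ext x
  simp only [Finset.mem_biUnion, Finset.mem_union]
  constructor
  · rintro ⟨j, hj, hx | hx⟩
    · exact Or.inl ⟨j, hj, hx⟩
    · exact Or.inr ⟨j, hj, hx⟩
  · rintro (⟨j, hj, hx⟩ | ⟨j, hj, hx⟩)
    · exact ⟨j, hj, Or.inl hx⟩
    · exact ⟨j, hj, Or.inr hx⟩

lemma biUnion_inter' [DecidableEq α] {n : ℕ} (M : Fin n → Finset α)
    (hM : ∀ i j : Fin n, i ≠ j → Disjoint (M i) (M j))
    (S T : Fin n → Finset α) (hS : ∀ j, S j ⊆ M j) (hT : ∀ j, T j ⊆ M j) (I : Finset (Fin n)) :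
    I.biUnion (fun j => S j ∩ T j) = I.biUnion S ∩ I.biUnion T := by
  ext x
  simp only [Finset.mem_biUnion, Finset.mem_inter]
  constructor
  · rintro ⟨j, hj, hx⟩
    exact ⟨⟨j, hj, hx.1⟩, ⟨j, hj, hx.2⟩⟩
  · rintro ⟨⟨j, hj, hxS⟩, ⟨j', hj', hxT⟩⟩
    rcases eq_or_ne j j' with rfl | hne
    · exact ⟨j, hj, hxS, hxT⟩
    · exact absurd (hT j' hxT) (Finset.disjoint_left.1 (hM j j' hne) (hS j hxS)).elim

lemma potential_submod [DecidableEq α] {n : ℕ} (C : Finset α → ℝ)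
    (hCsub : ∀ S T : Finset α, C (S ∪ T) + C (S ∩ T) ≤ C S + C T)
    (M : Fin n → Finset α) (hM : ∀ i j : Fin n, i ≠ j → Disjoint (M i) (M j))
    (S T : Fin n → Finset α) (hS : ∀ j, S j ⊆ M j) (hT : ∀ j, T j ⊆ M j) :
    potential n C (fun j => S j ∪ T j) + potential n C (fun j => S j ∩ T j)
      ≤ potential n C S + potential n C T := by
  rw [potential, potential, potential, potential, ← Finset.sum_add_distrib,
    ← Finset.sum_add_distrib]
  refine Finset.sum_le_sum fun I hI => ?_
  have hIne : I ≠ ∅ := by simpa using (Finset.mem_filter.1 hI).2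
  have hd := dpos (n := n) hIne
  rw [← add_div, ← add_div, div_le_div_iff_of_pos_right hd]
  rw [biUnion_union' S T I, biUnion_inter' M hM S T hS hT I]
  exact hCsub _ _

lemma exchange [DecidableEq α] {n : ℕ} (C : Finset α → ℝ)
    (hCsub : ∀ S T : Finset α, C (S ∪ T) + C (S ∩ T) ≤ C S + C T)
    (M : Fin n → Finset α) (hM : ∀ i j : Fin n, i ≠ j → Disjoint (M i) (M j))
    (v : Fin n → Finset α → ℝ)
    (S T : Fin n → Finset α) (hS : ∀ j, S j ⊆ M j) (hT : ∀ j, T j ⊆ M j)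
    (hv : ∀ j, v j (S j) + v j (T j) ≤ v j (S j ∪ T j) + v j (S j ∩ T j)) :
    (∑ j, v j (S j) - potential n C S) + (∑ j, v j (T j) - potential n C T)
      ≤ (∑ j, v j (S j ∪ T j) - potential n C (fun j => S j ∪ T j))
        + (∑ j, v j (S j ∩ T j) - potential n C (fun j => S j ∩ T j)) := by
  have h1 := potential_submod C hCsub M hM S T hS hT
  have h2 : ∑ j, v j (S j) + ∑ j, v j (T j)
      ≤ ∑ j, v j (S j ∪ T j) + ∑ j, v j (S j ∩ T j) := by
    rw [← Finset.sum_add_distrib, ← Finset.sum_add_distrib]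
    exact Finset.sum_le_sum fun j _ => hv j
  linarith

lemma key_aux [DecidableEq α] {n : ℕ} (C : Finset α → ℝ)
    (hCsub : ∀ S T : Finset α, C (S ∪ T) + C (S ∩ T) ≤ C S + C T)
    (M : Fin n → Finset α) (hM : ∀ i j : Fin n, i ≠ j → Disjoint (M i) (M j))
    (v : Fin n → Finset α → ℝ)
    (hvsup : ∀ i, ∀ S T : Finset α, S ⊆ M i → T ⊆ M i →
        v i S + v i T ≤ v i (S ∪ T) + v i (S ∩ T))
    (ALG : Fin n → Finset α)
    (hALGmax : ∀ S : Fin n → Finset α, (∀ i, S i ⊆ M i) →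
      ∑ j, v j (S j) - potential n C S ≤ ∑ j, v j (ALG j) - potential n C ALG)
    (A : Fin n → Fin n → Finset α) (hAsub : ∀ i j, A i j ⊆ M j)
    (K : Finset (Fin n)) (hK : K.Nonempty) :
    ∃ B : Fin n → Finset α, (∀ j, B j ⊆ M j) ∧ (∀ i ∈ K, ∀ j, B j ⊆ A i j) ∧
      ∑ i ∈ K, (∑ j, v j (A i j) - potential n C (A i))
        ≤ ((K.card : ℝ) - 1) * (∑ j, v j (ALG j) - potential n C ALG)
          + (∑ j, v j (B j) - potential n C B) := by
  induction K using Finset.cons_induction with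
  | empty => exact absurd hK (by simp)
  | cons a s ha ih =>
    rcases s.eq_empty_or_nonempty with rfl | hs
    · refine ⟨A a, hAsub a, ?_, ?_⟩
      · intro i hi j
        simp only [Finset.cons_empty, Finset.mem_singleton] at hi
        subst hi; exact subset_rfl
      · simp
    · obtain ⟨B, hBsub, hBle, hB⟩ := ih hs
      refine ⟨fun j => B j ∩ A a j, fun j => (Finset.inter_subset_left).trans (hBsub j), ?_, ?_⟩
      · intro i hi j
        rcases Finset.mem_cons.1 hi with rfl | hi'
        · exact Finset.inter_subset_right
        · exact Finset.inter_subset_left.trans (hBle i hi' j)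
      · have hex := exchange C hCsub M hM v B (A a) hBsub (hAsub a)
          (fun j => hvsup j _ _ (hBsub j) (hAsub a j))
        have hfeas : ∀ j, B j ∪ A a j ⊆ M j :=
          fun j => Finset.union_subset (hBsub j) (hAsub a j)
        have halg := hALGmax (fun j => B j ∪ A a j) hfeas
        rw [Finset.sum_cons, Finset.card_cons]
        push_cast
        linarith

theorem stmt14 [DecidableEq α] (n : ℕ) (M : Fin n → Finset α)
    (hM : ∀ i j : Fin n, i ≠ j → Disjoint (M i) (M j))
    (C : Finset α → ℝ) (hC0 : C ∅ = 0) (hCnn : ∀ S, 0 ≤ C S)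
    (hCmono : ∀ S T : Finset α, S ⊆ T → C S ≤ C T)
    (hCsub : ∀ S T : Finset α, C (S ∪ T) + C (S ∩ T) ≤ C S + C T)
    (v : Fin n → Finset α → ℝ) (hv0 : ∀ i, v i ∅ = 0)
    (hvmono : ∀ i, ∀ S T : Finset α, S ⊆ T → T ⊆ M i → v i S ≤ v i T)
    (hcase : (∀ i, ∀ S T : Finset α, S ⊆ M i → T ⊆ M i →
        v i S + v i T ≤ v i (S ∪ T) + v i (S ∩ T)) ∨ n = 2)
    (ALG : Fin n → Finset α) (hALGsub : ∀ i, ALG i ⊆ M i)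
    (hALGmax : ∀ S : Fin n → Finset α, (∀ i, S i ⊆ M i) →
      ∑ j, v j (S j) - potential n C S ≤ ∑ j, v j (ALG j) - potential n C ALG)
    (A : Fin n → Fin n → Finset α) (hAsub : ∀ i j, A i j ⊆ M j)
    (hAii : ∀ i, A i i = ∅)
    (hAmax : ∀ i, ∀ S : Fin n → Finset α, (∀ j, S j ⊆ M j) → S i = ∅ →
      ∑ j, v j (S j) - potential n C S ≤ ∑ j, v j (A i j) - potential n C (A i))
    (p : Fin n → ℝ)
    (hp : ∀ i, p i = (∑ j, v j (A i j) - potential n C (A i)) -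
      (∑ j ∈ univ.erase i, v j (ALG j) - potential n C ALG)) :
    C (univ.biUnion ALG) ≤ ∑ i, p i ∧
      ∑ i, p i ≤ (∑ k ∈ Finset.range n, (1 : ℝ) / (k + 1)) * C (univ.biUnion ALG) := by
  rcases Nat.eq_zero_or_pos n with hn0 | hn
  · subst hn0
    constructor <;> simp [hC0]
  -- preliminary: per-player lower bound on the benchmark term
  have hupd : ∀ i, ∑ j ∈ univ.erase i, v j (ALG j)
      - potential n C (Function.update ALG i ∅)
      ≤ ∑ j, v j (A i j) - potential n C (A i) := by
    intro i
    have hfe : ∀ j, Function.update ALG i ∅ j ⊆ M j := by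
      intro j
      rcases eq_or_ne j i with rfl | h
      · simp [Function.update_self]
      · rw [Function.update_of_ne h]; exact hALGsub j
    have hmax := hAmax i (Function.update ALG i ∅) hfe (Function.update_self i ∅ ALG)
    have hsum : ∑ j, v j (Function.update ALG i ∅ j) = ∑ j ∈ univ.erase i, v j (ALG j) := by
      rw [← Finset.sum_erase_add _ _ (Finset.mem_univ i), Function.update_self, hv0 i, add_zero]
      refine Finset.sum_congr rfl fun j hj => ?_
      rw [Function.update_of_ne (Finset.ne_of_mem_erase hj)]
    rw [hsum] at hmax
    exact hmax
  constructor
  · -- lower bound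
    have hs := shapley hn C hC0 ALG
    rw [← hs]
    refine Finset.sum_le_sum fun i _ => ?_
    rw [hp i]
    have h := hupd i
    linarith
  · -- upper bound
    have hkey : ∑ i, (∑ j, v j (A i j) - potential n C (A i))
        ≤ ((n : ℝ) - 1) * (∑ j, v j (ALG j) - potential n C ALG) := by
      rcases hcase with hsup | hn2
      · have huniv : (univ : Finset (Fin n)).Nonempty := ⟨⟨0, hn⟩, Finset.mem_univ _⟩
        obtain ⟨B, hBsub, hBle, hB⟩ :=
          key_aux C hCsub M hM v hsup ALG hALGmax A hAsub univ huniv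
        have hBempty : B = fun _ => (∅ : Finset α) := by
          funext j
          have := hBle j (Finset.mem_univ j) j
          rw [hAii j] at this
          exact Finset.subset_empty.1 this
        rw [hBempty, potential_empty n C hC0] at hB
        simp only [hv0, Finset.sum_const_zero, sub_zero, add_zero] at hB
        rw [Finset.card_univ, Fintype.card_fin] at hB
        exact hB
      · subst hn2
        have hv12 : ∀ j : Fin 2, v j (A 0 j) + v j (A 1 j)
            ≤ v j (A 0 j ∪ A 1 j) + v j (A 0 j ∩ A 1 j) := by
          rw [Fin.forall_fin_two]
          constructor
          · rw [hAii 0]; simp; linarith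
          · rw [hAii 1]; simp
        have hex := exchange C hCsub M hM v (A 0) (A 1) (hAsub 0) (hAsub 1) hv12
        have hfeas : ∀ j, A 0 j ∪ A 1 j ⊆ M j :=
          fun j => Finset.union_subset (hAsub 0 j) (hAsub 1 j)
        have halg : ∑ j : Fin 2, v j (A 0 j ∪ A 1 j)
            - potential 2 C (fun j => A 0 j ∪ A 1 j)
            ≤ ∑ j, v j (ALG j) - potential 2 C ALG := hALGmax _ hfeas
        have hinter : ∀ j : Fin 2, A 0 j ∩ A 1 j = (∅ : Finset α) := by
          rw [Fin.forall_fin_two]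
          exact ⟨by rw [hAii 0]; simp, by rw [hAii 1]; simp⟩
        simp only [hinter, hv0, Finset.sum_const_zero] at hex
        rw [potential_empty 2 C hC0, sub_zero] at hex
        rw [Fin.sum_univ_two]
        have h21 : ((2 : ℕ) : ℝ) - 1 = 1 := by norm_num
        rw [h21, one_mul]
        linarith
    have hsum_erase : ∑ i, ∑ j ∈ univ.erase i, v j (ALG j)
        = ((n : ℝ) - 1) * ∑ j, v j (ALG j) := by
      have h1 : ∀ i : Fin n, ∑ j ∈ univ.erase i, v j (ALG j)
          = (∑ j, v j (ALG j)) - v i (ALG i) := by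
        intro i
        rw [← Finset.sum_erase_add _ _ (Finset.mem_univ i)]
        ring
      rw [Finset.sum_congr rfl fun i _ => h1 i, Finset.sum_sub_distrib, Finset.sum_const,
        Finset.card_univ, Fintype.card_fin, nsmul_eq_mul]
      ring
    have hA1 : ∑ i : Fin n, (∑ j ∈ univ.erase i, v j (ALG j) - potential n C ALG)
        = ((n : ℝ) - 1) * ∑ j, v j (ALG j) - (n : ℝ) * potential n C ALG := by
      rw [Finset.sum_sub_distrib, hsum_erase, Finset.sum_const, Finset.card_univ,
        Fintype.card_fin, nsmul_eq_mul]
    have h1 : ∑ i, p i = (∑ i, (∑ j, v j (A i j) - potential n C (A i)))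
        - (((n : ℝ) - 1) * ∑ j, v j (ALG j) - (n : ℝ) * potential n C ALG) := by
      rw [Finset.sum_congr rfl fun i _ => hp i, Finset.sum_sub_distrib, hA1]
    have h2 : ∑ i, p i ≤ potential n C ALG := by
      rw [h1]
      linarith
    have h3 := potential_le_harmonic n C hCnn hCmono ALG
    linarith
end
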